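/- Let λ ∈ ℂ^× and N, ρ ≥ 1. The matrix R_N(J_ρ(λ)) := J_N ⊗ I_ρ + K_N^{N−1} ⊗ J_ρ(λ) of size Nρ is similar (via a permutation matrix) to the block matrix I_ρ ⊗ J_N + J_ρ(λ) ⊗ K_N^{N−1}, which is block upper triangular with ρ diagonal blocks each equal to R_N(λ). Consequently, the characteristic polynomial of R_N(J_ρ(λ)) equals (t^N − λ)^ρ. -/

import Mathlib

open Matrix Kronecker Polynomial

/-- The `N × N` nilpotent Jordan block `J_N` (1's on the superdiagonal). -/
noncomputable def nilJ (N : ℕ) : Matrix (Fin N) (Fin N) ℂ :=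
  Matrix.of fun i j => if (i : ℕ) + 1 = (j : ℕ) then 1 else 0

lemma nilJ_pow (N k : ℕ) (i j : Fin N) :
    (nilJ N ^ k) i j = if (i : ℕ) + k = (j : ℕ) then 1 else 0 := by
  induction k generalizing i j with
  | zero => simp [one_apply, Fin.ext_iff, eq_comm]
  | succ k ih =>
    rw [pow_succ, mul_apply]
    have hn : ∀ b j : Fin N, nilJ N b j = if (b : ℕ) + 1 = (j : ℕ) then 1 else 0 :=
      fun _ _ => rfl
    simp only [ih, hn]
    by_cases h : (i : ℕ) + (k + 1) = (j : ℕ)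
    · have hik : (i : ℕ) + k < N := by omega
      rw [Finset.sum_eq_single (⟨(i : ℕ) + k, hik⟩ : Fin N)]
      · simp only [Fin.val_mk, if_pos rfl, one_mul, if_pos h]
        have h' : (i : ℕ) + k + 1 = (j : ℕ) := by omega
        simp [h']
      · intro b _ hb
        rw [if_neg, zero_mul]
        intro hh; exact hb (Fin.ext hh.symm)
      · intro hh; exact absurd (Finset.mem_univ _) hh
    · rw [if_neg h]
      apply Finset.sum_eq_zero
      intro b _
      by_cases h1 : (i : ℕ) + k = (b : ℕ)
      · rw [if_pos h1, one_mul, if_neg]; omega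
      · rw [if_neg h1, zero_mul]

lemma nilJT_pow (N k : ℕ) (i j : Fin N) :
    ((nilJ N)ᵀ ^ k) i j = if (j : ℕ) + k = (i : ℕ) then 1 else 0 := by
  rw [← transpose_pow, transpose_apply, nilJ_pow]

lemma RN_apply (N : ℕ) (lam : ℂ) (k : ℕ) (i j : Fin N) :
    (nilJ N + lam • ((nilJ N)ᵀ ^ k)) i j
      = (if (i : ℕ) + 1 = (j : ℕ) then 1 else 0)
        + lam * (if (j : ℕ) + k = (i : ℕ) then 1 else 0) := by
  rw [Matrix.add_apply, Matrix.smul_apply, nilJT_pow, smul_eq_mul]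
  simp [nilJ, mul_ite, mul_one, mul_zero]

lemma charpoly_RN (N : ℕ) (hN : 1 ≤ N) (lam : ℂ) :
    (nilJ N + lam • ((nilJ N)ᵀ ^ (N - 1))).charpoly = X ^ N - C lam := by
  rcases N with _ | n
  · omega
  rcases n with _ | m
  · -- N = 1
    rw [Matrix.charpoly, Matrix.det_fin_one, charmatrix_apply_eq, pow_one, RN_apply]
    norm_num
  · -- N = m + 2
    set A := charmatrix (nilJ (m+2) + lam • ((nilJ (m+2))ᵀ ^ (m+2-1))) with hAdef
    have hA : ∀ i j : Fin (m+2), A i j =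
        (if i = j then X else 0)
          - C ((if (i : ℕ) + 1 = (j : ℕ) then 1 else 0)
            + lam * (if (j : ℕ) + (m+1) = (i : ℕ) then 1 else 0)) := by
      intro i j
      rw [hAdef, charmatrix_apply, RN_apply, Matrix.diagonal_apply]
      norm_num
    rw [Matrix.charpoly, det_succ_column_zero]
    set f : Fin (m+2) → ℂ[X] :=
      fun i => (-1) ^ (i : ℕ) * A i 0 * (A.submatrix i.succAbove Fin.succ).det with hf
    have key : ∀ i : Fin (m+2), i ≠ 0 → i ≠ Fin.last (m+1) → f i = 0 := by
      intro i h0 hl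
      have hi0 : (i : ℕ) ≠ 0 := fun h => h0 (Fin.ext h)
      have hil : (i : ℕ) ≠ m + 1 := fun h => hl (Fin.ext (by simp [Fin.val_last, h]))
      have : A i 0 = 0 := by
        rw [hA, if_neg h0, if_neg (by simp; try omega), if_neg (by simp; try omega)]
        simp
      rw [hf]; dsimp only; rw [this, mul_zero, zero_mul]
    have hne : (0 : Fin (m+2)) ≠ Fin.last (m+1) := by
      simp [Fin.ext_iff, Fin.val_last]
    have hsum : ∑ i : Fin (m+2), f i = f 0 + f (Fin.last (m+1)) := by
      rw [← Finset.sum_pair hne]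
      refine (Finset.sum_subset (Finset.subset_univ _) ?_).symm
      intro x _ hx
      simp only [Finset.mem_insert, Finset.mem_singleton, not_or] at hx
      exact key x hx.1 hx.2
    have hminor0 : (A.submatrix (Fin.succ) (Fin.succ)).det = X ^ (m+1) := by
      have ht : (A.submatrix (Fin.succ) (Fin.succ)).BlockTriangular id := by
        intro i j hij
        have hij' : (j : ℕ) < (i : ℕ) := hij
        rw [submatrix_apply, hA, if_neg (by simp [Fin.ext_iff]; try omega),
          if_neg (by simp [Fin.ext_iff]; try omega), if_neg (by simp; try omega)]
        simp
      have hdiag : ∀ i : Fin (m+1), A i.succ i.succ = X := by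
        intro i
        rw [hA, if_pos rfl, if_neg (by simp), if_neg (by simp; try omega)]
        simp
      rw [det_of_upperTriangular ht]
      calc ∏ i : Fin (m+1), (A.submatrix (Fin.succ) (Fin.succ)) i i
          = ∏ _i : Fin (m+1), (X : ℂ[X]) :=
            Finset.prod_congr rfl fun i _ => hdiag i
        _ = X ^ (m+1) := by simp
    have hminorl : (A.submatrix (Fin.castSucc) (Fin.succ)).det = (-1) ^ (m+1) := by
      have ht : (A.submatrix (Fin.castSucc) (Fin.succ)).BlockTriangular OrderDual.toDual := by
        intro i j hij
        have hij' : (i : ℕ) < (j : ℕ) := hij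
        rw [submatrix_apply, hA, if_neg (by simp [Fin.ext_iff]; try omega),
          if_neg (by simp; try omega), if_neg (by simp; try omega)]
        simp
      have hdiag : ∀ i : Fin (m+1), A i.castSucc i.succ = -1 := by
        intro i
        rw [hA, if_neg (by simp [Fin.ext_iff]; try omega), if_pos (by simp),
          if_neg (by simp; try omega)]
        simp
      rw [det_of_lowerTriangular _ ht]
      calc ∏ i : Fin (m+1), (A.submatrix (Fin.castSucc) (Fin.succ)) i i
          = ∏ _i : Fin (m+1), (-1 : ℂ[X]) :=
            Finset.prod_congr rfl fun i _ => hdiag i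
        _ = (-1) ^ (m+1) := by simp
    have hA00 : A 0 0 = X := by
      rw [hA, if_pos rfl, if_neg (by simp), if_neg (by simp)]
      simp
    have hAl0 : A (Fin.last (m+1)) 0 = -C lam := by
      rw [hA, if_neg hne.symm, if_neg (by simp [Fin.val_last]), if_pos (by simp [Fin.val_last])]
      simp
    rw [hsum, hf]
    dsimp only
    rw [Fin.succAbove_zero, Fin.succAbove_last, hminor0, hminorl, hA00, hAl0]
    have hpow : ((-1 : ℂ[X]) ^ (m+1)) * ((-1) ^ (m+1)) = 1 := by
      rw [← pow_add]
      exact Even.neg_one_pow ⟨m+1, by ring⟩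
    simp only [Fin.val_zero, pow_zero, one_mul, Fin.val_last]
    have h1 : (-1 : ℂ[X]) ^ (m+1) * (-C lam) * (-1) ^ (m+1) = -C lam := by
      linear_combination (-C lam) * hpow
    rw [h1]
    ring

/-- The `ρ × ρ` Jordan block with eigenvalue `λ`. -/
noncomputable def jordanBlock (ρ : ℕ) (lam : ℂ) : Matrix (Fin ρ) (Fin ρ) ℂ :=
  Matrix.of fun i j => if i = j then lam else if (i : ℕ) + 1 = (j : ℕ) then 1 else 0

/-- `R_N(J_ρ(λ)) = J_N ⊗ I_ρ + K_N^{N-1} ⊗ J_ρ(λ)` where `K_N = J_Nᵀ`. -/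
noncomputable def RNJ (N ρ : ℕ) (lam : ℂ) : Matrix (Fin N × Fin ρ) (Fin N × Fin ρ) ℂ :=
  nilJ N ⊗ₖ (1 : Matrix (Fin ρ) (Fin ρ) ℂ) + ((nilJ N)ᵀ ^ (N - 1)) ⊗ₖ jordanBlock ρ lam

/-- The block matrix `I_ρ ⊗ J_N + J_ρ(λ) ⊗ K_N^{N-1}`. -/
noncomputable def blockForm (N ρ : ℕ) (lam : ℂ) : Matrix (Fin ρ × Fin N) (Fin ρ × Fin N) ℂ :=
  (1 : Matrix (Fin ρ) (Fin ρ) ℂ) ⊗ₖ nilJ N + jordanBlock ρ lam ⊗ₖ ((nilJ N)ᵀ ^ (N - 1))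

set_option maxHeartbeats 1000000 in
/-- `R_N(J_ρ(λ))` is similar via a permutation to `I_ρ ⊗ J_N + J_ρ(λ) ⊗ K_N^{N-1}`,
which is block upper triangular with `ρ` diagonal blocks each equal to `R_N(λ)`;
consequently the characteristic polynomial of `R_N(J_ρ(λ))` is `(t^N - λ)^ρ`. -/
theorem RNJ_perm_similar_blockForm (N ρ : ℕ) (hN : 1 ≤ N) (hρ : 1 ≤ ρ)
    (lam : ℂ) (hlam : lam ≠ 0) :
    (∃ e : (Fin ρ × Fin N) ≃ (Fin N × Fin ρ),
        (RNJ N ρ lam).submatrix ⇑e ⇑e = blockForm N ρ lam) ∧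
    (∀ a : Fin ρ,
        (Matrix.of fun i j => blockForm N ρ lam (a, i) (a, j)) =
          nilJ N + lam • ((nilJ N)ᵀ ^ (N - 1))) ∧
    (∀ a b : Fin ρ, b < a → ∀ i j, blockForm N ρ lam (a, i) (b, j) = 0) ∧
    (RNJ N ρ lam).charpoly = (X ^ N - C lam) ^ ρ := by
  have hperm : (RNJ N ρ lam).submatrix ⇑(Equiv.prodComm (Fin ρ) (Fin N))
      ⇑(Equiv.prodComm (Fin ρ) (Fin N)) = blockForm N ρ lam := by
    ext ⟨a, i⟩ ⟨b, j⟩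
    simp only [RNJ, blockForm, submatrix_apply, Equiv.prodComm_apply, Prod.swap_prod_mk,
      Matrix.add_apply, kroneckerMap_apply]
    ring
  have hdiag : ∀ a : Fin ρ,
      (Matrix.of fun i j => blockForm N ρ lam (a, i) (a, j)) =
        nilJ N + lam • ((nilJ N)ᵀ ^ (N - 1)) := by
    intro a
    ext i j
    simp only [blockForm, of_apply, Matrix.add_apply, kroneckerMap_apply, one_apply_eq, one_mul,
      Matrix.smul_apply, smul_eq_mul]
    have : jordanBlock ρ lam a a = lam := by simp [jordanBlock]
    rw [this]
  have hlow : ∀ a b : Fin ρ, b < a → ∀ i j, blockForm N ρ lam (a, i) (b, j) = 0 := by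
    intro a b hba i j
    have h1 : (b : ℕ) < (a : ℕ) := hba
    have h2 : jordanBlock ρ lam a b = 0 := by
      rw [jordanBlock, of_apply, if_neg (by exact fun h => by simp [h] at h1),
        if_neg (by omega)]
    simp only [blockForm, Matrix.add_apply, kroneckerMap_apply, h2, zero_mul,
      one_apply_ne hba.ne', zero_mul, add_zero]
  refine ⟨⟨Equiv.prodComm (Fin ρ) (Fin N), hperm⟩, hdiag, hlow, ?_⟩
  have hbt : (blockForm N ρ lam).BlockTriangular Prod.fst := fun p q h =>
    hlow p.1 q.1 h p.2 q.2
  have h2 := Matrix.charpoly_reindex (Equiv.prodComm (Fin ρ) (Fin N)).symm (RNJ N ρ lam)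
  rw [reindex_apply, Equiv.symm_symm] at h2
  rw [hperm] at h2
  rw [← h2, hbt.charpoly]
  clear h2 hperm hbt
  have hblock : ∀ a : Fin ρ,
      ((blockForm N ρ lam).toSquareBlock Prod.fst a).charpoly = X ^ N - C lam := by
    intro a
    let e2 : Fin N ≃ {p : Fin ρ × Fin N // p.1 = a} :=
      { toFun := fun i => ⟨(a, i), rfl⟩
        invFun := fun p => p.1.2
        left_inv := fun i => rfl
        right_inv := fun p => by
          obtain ⟨⟨b, i⟩, h⟩ := p
          simp only at h
          subst h
          rfl }
    have hsq : (blockForm N ρ lam).toSquareBlock Prod.fst a =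
        reindex e2 e2 (nilJ N + lam • ((nilJ N)ᵀ ^ (N - 1))) := by
      ext ⟨⟨b, i⟩, hb⟩ ⟨⟨c, j⟩, hc⟩
      obtain rfl : b = a := hb
      obtain rfl : c = b := hc
      have hd := congrFun (congrFun (hdiag c) i) j
      simp only [of_apply] at hd
      simpa [toSquareBlock_def, reindex_apply, submatrix_apply, e2] using hd
    rw [hsq, Matrix.charpoly_reindex, charpoly_RN N hN lam]
  have hprod : ∏ a ∈ (Finset.univ.image (Prod.fst : Fin ρ × Fin N → Fin ρ)),
      ((blockForm N ρ lam).toSquareBlock Prod.fst a).charpoly = (X ^ N - C lam) ^ ρ := by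
    have himg : (Finset.univ.image (Prod.fst : Fin ρ × Fin N → Fin ρ)) = Finset.univ :=
      Finset.eq_univ_of_forall fun a =>
        Finset.mem_image.2 ⟨(a, ⟨0, hN⟩), Finset.mem_univ _, rfl⟩
    rw [himg, Finset.prod_congr rfl (fun a _ => hblock a), Finset.prod_const,
      Finset.card_univ, Fintype.card_fin]
  have hS : ∀ (d1 d2 : DecidableEq (Fin ρ)),
      @Finset.image (Fin ρ × Fin N) (Fin ρ) d1 Prod.fst Finset.univ
        = @Finset.image (Fin ρ × Fin N) (Fin ρ) d2 Prod.fst Finset.univ := by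
    intro d1 d2
    have : d1 = d2 := by funext a b; exact Subsingleton.elim _ _
    rw [this]
  have hF : ∀ (a : Fin ρ) (d : DecidableEq {p : Fin ρ × Fin N // p.1 = a})
      (f1 f2 : Fintype {p : Fin ρ × Fin N // p.1 = a}),
      @Matrix.charpoly ℂ _ _ d f1 ((blockForm N ρ lam).toSquareBlock Prod.fst a)
        = @Matrix.charpoly ℂ _ _ d f2 ((blockForm N ρ lam).toSquareBlock Prod.fst a) := by
    intro a d f1 f2
    have : f1 = f2 := Subsingleton.elim _ _
    rw [this]
  exact (Finset.prod_congr (hS _ _) (fun a _ => hF a _ _ _)).trans hprod
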